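/- Let t ∈ ℝ with t ≠ 0, and let F_t : ℝ² → ℝ be the x₃ = t slice of the three-dimensional elliptic umbilic generating family, F_t(y₁, y₂) = (1/3)y₁³ − y₁y₂² + t y₁². Then the critical locus {(y₁, y₂) ∈ ℝ² : det Hess F_t(y₁, y₂) = 0} is exactly the circle with centre (−t/2, 0) and radius |t|/2, and the caustic of F_t is the image of this circle under the map ∇F_t(y₁, y₂) = (y₁² − y₂² + 2t y₁, −2y₁y₂). -/

import Mathlib

/-- The point of `ℝ²` (with the Euclidean norm) with coordinates `a`, `b`. -/
noncomputable def pt (a b : ℝ) : EuclideanSpace ℝ (Fin 2) :=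
  (WithLp.equiv 2 (Fin 2 → ℝ)).symm ![a, b]

/-- The Hessian matrix of `f : ℝ² → ℝ` at `y`. -/
noncomputable def Hess (f : EuclideanSpace ℝ (Fin 2) → ℝ)
    (y : EuclideanSpace ℝ (Fin 2)) : Matrix (Fin 2) (Fin 2) ℝ :=
  Matrix.of fun i j =>
    fderiv ℝ (fun z => fderiv ℝ f z (EuclideanSpace.single j 1)) y (EuclideanSpace.single i 1)

/-- The `x₃ = t` slice of the three-dimensional elliptic umbilic generating
family. -/
noncomputable def ellipticUmbilicSlice (t : ℝ) : EuclideanSpace ℝ (Fin 2) → ℝ :=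
  fun y => (1 / 3) * (y 0) ^ 3 - (y 0) * (y 1) ^ 2 + t * (y 0) ^ 2

/-- The Lagrangian map associated with the slice `F_t`. -/
noncomputable def ellipticUmbilicSliceMap (t : ℝ) :
    EuclideanSpace ℝ (Fin 2) → EuclideanSpace ℝ (Fin 2) :=
  fun y => pt ((y 0) ^ 2 - (y 1) ^ 2 + 2 * t * (y 0)) (-2 * (y 0) * (y 1))

section aux
local notation "E" => EuclideanSpace ℝ (Fin 2)

lemma pt_apply (a b : ℝ) (i : Fin 2) : pt a b i = ![a, b] i := rfl

lemma proj_hasFDerivAt (i : Fin 2) (y : E) :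
    HasFDerivAt (fun z : E => z i) (EuclideanSpace.proj i : E →L[ℝ] ℝ) y := by
  have := (EuclideanSpace.proj (𝕜 := ℝ) i).hasFDerivAt (x := y)
  convert this using 1
  funext z; rfl

lemma f_hasFDerivAt (t : ℝ) (y : E) :
    HasFDerivAt (ellipticUmbilicSlice t)
      (((y 0) ^ 2 - (y 1) ^ 2 + 2 * t * (y 0)) • (EuclideanSpace.proj 0 : E →L[ℝ] ℝ)
        + (-2 * (y 0) * (y 1)) • (EuclideanSpace.proj 1 : E →L[ℝ] ℝ)) y := by
  have h0 := proj_hasFDerivAt 0 y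
  have h1 := proj_hasFDerivAt 1 y
  have h := ((((h0.mul h0).mul h0).const_mul (1/3:ℝ)).sub (h0.mul (h1.mul h1))).add
    ((h0.mul h0).const_mul t)
  convert h using 1 <;> try rfl
  · funext z
    simp only [ellipticUmbilicSlice, Pi.mul_apply, Pi.add_apply, Pi.sub_apply]
    ring
  · ext v
    simp [PiLp.proj_apply]
    ring

lemma f_fderiv_apply0 (t : ℝ) (z : E) :
    fderiv ℝ (ellipticUmbilicSlice t) z (EuclideanSpace.single 0 1) =
      (z 0) ^ 2 - (z 1) ^ 2 + 2 * t * (z 0) := by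
  rw [(f_hasFDerivAt t z).fderiv]
  simp [PiLp.proj_apply, EuclideanSpace.single_apply]

lemma f_fderiv_apply1 (t : ℝ) (z : E) :
    fderiv ℝ (ellipticUmbilicSlice t) z (EuclideanSpace.single 1 1) =
      -2 * (z 0) * (z 1) := by
  rw [(f_hasFDerivAt t z).fderiv]
  simp [PiLp.proj_apply, EuclideanSpace.single_apply]

lemma g0_hasFDerivAt (t : ℝ) (y : E) :
    HasFDerivAt (fun z : E => (z 0) ^ 2 - (z 1) ^ 2 + 2 * t * (z 0))
      ((2 * (y 0) + 2 * t) • (EuclideanSpace.proj 0 : E →L[ℝ] ℝ)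
        + (-2 * (y 1)) • (EuclideanSpace.proj 1 : E →L[ℝ] ℝ)) y := by
  have h0 := proj_hasFDerivAt 0 y
  have h1 := proj_hasFDerivAt 1 y
  have h := ((h0.mul h0).sub (h1.mul h1)).add (h0.const_mul (2 * t))
  convert h using 1 <;> try rfl
  · funext z; simp only [Pi.mul_apply, Pi.add_apply, Pi.sub_apply]; ring
  · ext v; simp [PiLp.proj_apply]; ring

lemma g1_hasFDerivAt (y : E) :
    HasFDerivAt (fun z : E => -2 * (z 0) * (z 1))
      ((-2 * (y 1)) • (EuclideanSpace.proj 0 : E →L[ℝ] ℝ)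
        + (-2 * (y 0)) • (EuclideanSpace.proj 1 : E →L[ℝ] ℝ)) y := by
  have h0 := proj_hasFDerivAt 0 y
  have h1 := proj_hasFDerivAt 1 y
  have h := (h0.mul h1).const_mul (-2 : ℝ)
  convert h using 1 <;> try rfl
  · funext z; simp only [Pi.mul_apply, Pi.add_apply, Pi.sub_apply]; ring
  · ext v; simp [PiLp.proj_apply]; ring

lemma Hess_det (t : ℝ) (y : E) :
    (Hess (ellipticUmbilicSlice t) y).det =
      -4 * ((y 0) ^ 2 + t * (y 0) + (y 1) ^ 2) := by
  have e0 : (fun z : E => fderiv ℝ (ellipticUmbilicSlice t) z (EuclideanSpace.single 0 1)) =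
      fun z : E => (z 0) ^ 2 - (z 1) ^ 2 + 2 * t * (z 0) := funext fun z => f_fderiv_apply0 t z
  have e1 : (fun z : E => fderiv ℝ (ellipticUmbilicSlice t) z (EuclideanSpace.single 1 1)) =
      fun z : E => -2 * (z 0) * (z 1) := funext fun z => f_fderiv_apply1 t z
  have H : ∀ i j : Fin 2, Hess (ellipticUmbilicSlice t) y i j =
      fderiv ℝ (fun z => fderiv ℝ (ellipticUmbilicSlice t) z (EuclideanSpace.single j 1)) y
        (EuclideanSpace.single i 1) := fun i j => rfl
  rw [Matrix.det_fin_two, H 0 0, H 0 1, H 1 0, H 1 1, e0, e1,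
    (g0_hasFDerivAt t y).fderiv, (g1_hasFDerivAt y).fderiv]
  simp [PiLp.proj_apply, EuclideanSpace.single_apply]
  ring

lemma circle_iff (t : ℝ) (y : E) :
    ‖y - pt (-t / 2) 0‖ = |t| / 2 ↔ (y 0) ^ 2 + t * (y 0) + (y 1) ^ 2 = 0 := by
  have h1 : ‖y - pt (-t / 2) 0‖ =
      Real.sqrt ((y 0 - (-t / 2)) ^ 2 + ((y 1) - 0) ^ 2) := by
    rw [EuclideanSpace.norm_eq, Fin.sum_univ_two]
    simp only [PiLp.sub_apply, pt_apply, Matrix.cons_val_zero, Matrix.cons_val_one,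
      Matrix.head_cons, sq_abs, Real.norm_eq_abs]
  have h2 : |t| / 2 = Real.sqrt ((t / 2) ^ 2) := by
    rw [Real.sqrt_sq_eq_abs, abs_div]
    norm_num
  rw [h1, h2, Real.sqrt_inj (by positivity) (by positivity)]
  constructor <;> intro h <;> nlinarith

end aux

/-- For the slice `F_t(y₁,y₂) = (1/3)y₁³ − y₁y₂² + ty₁²` with `t ≠ 0`: its
Lagrangian map is `∇F_t = (y₁² − y₂² + 2ty₁, −2y₁y₂)`, the critical locus is
exactly the circle with centre `(−t/2, 0)` and radius `|t|/2`, and the caustic is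
the image of this circle under `∇F_t`. -/
theorem ellipticUmbilicSlice_caustic (t : ℝ) (ht : t ≠ 0) :
    (∀ y, gradient (ellipticUmbilicSlice t) y = ellipticUmbilicSliceMap t y) ∧
    {y | (Hess (ellipticUmbilicSlice t) y).det = 0} =
      {y | ‖y - pt (-t / 2) 0‖ = |t| / 2} ∧
    ellipticUmbilicSliceMap t '' {y | (Hess (ellipticUmbilicSlice t) y).det = 0} =
      ellipticUmbilicSliceMap t '' {y | ‖y - pt (-t / 2) 0‖ = |t| / 2} := by
  have hcrit : {y : EuclideanSpace ℝ (Fin 2) |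
      (Hess (ellipticUmbilicSlice t) y).det = 0} =
      {y | ‖y - pt (-t / 2) 0‖ = |t| / 2} := by
    ext y
    simp only [Set.mem_setOf_eq, Hess_det, circle_iff]
    constructor <;> intro h <;> nlinarith
  refine ⟨?_, hcrit, by rw [hcrit]⟩
  intro y
  have h : HasGradientAt (ellipticUmbilicSlice t) (ellipticUmbilicSliceMap t y) y := by
    rw [hasGradientAt_iff_hasFDerivAt]
    have hf := f_hasFDerivAt t y
    convert hf using 1 <;> try rfl
    ext v
    simp [InnerProductSpace.toDual_apply_apply, ellipticUmbilicSliceMap,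
      PiLp.inner_apply, Fin.sum_univ_two, pt_apply, PiLp.proj_apply,
      RCLike.inner_apply]
    ring
  exact h.gradient
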